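/- arXiv:math/0601074 — 6 statements merged into one kernel-verified Lean document; each statement's English description precedes it below -/
import Mathlib

section
/- For sequences u with finitely many nonzero entries, the following identity holds: -(B(u,u), A^{γ/α} u) = (λ^{2γ+1} - λ) · Σ_{n=1}^∞ λ^{(1+2γ)n} u_n² u_{n+1}, where (A^{γ/α}u)_n = λ^{2γn} u_n. -/
/-- `-(B(u,u), A^{γ/α} u) = (λ^{2γ+1} - λ) Σ_{n≥1} λ^{(1+2γ)n} u_n² u_{n+1}`,
where `(B(u,u))_n = -λ^n u_{n-1}² + λ^{n+1} u_n u_{n+1}` and `(A^{γ/α}u)_n = λ^{2γn} u_n`,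
for sequences with finitely many nonzero entries and `u_0 = 0`. -/
theorem stmt1 (l γ : ℝ) (hl : 1 < l) (hγ : 0 < γ) (u : ℕ → ℝ) (hu0 : u 0 = 0)
    (hfin : ∃ N : ℕ, ∀ n ≥ N, u n = 0) :
    -(∑' n : ℕ,
        (-(l ^ (n + 1)) * u n ^ 2 + l ^ (n + 2) * u (n + 1) * u (n + 2)) *
          (l ^ ((2 * γ) * (n + 1 : ℕ)) * u (n + 1)))
      = (l ^ (2 * γ + 1) - l) *
        ∑' n : ℕ, l ^ ((1 + 2 * γ) * (n + 1 : ℕ)) * u (n + 1) ^ 2 * u (n + 2) := by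
  obtain ⟨N, hN⟩ := hfin
  have hl0 : (0:ℝ) < l := lt_trans one_pos hl
  set f : ℕ → ℝ := fun n =>
    (-(l ^ (n + 1)) * u n ^ 2 + l ^ (n + 2) * u (n + 1) * u (n + 2)) *
      (l ^ ((2 * γ) * (n + 1 : ℕ)) * u (n + 1)) with hf
  set g : ℕ → ℝ := fun n => l ^ ((1 + 2 * γ) * (n + 1 : ℕ)) * u (n + 1) ^ 2 * u (n + 2) with hg
  have hfz : ∀ n ∉ Finset.range N, f n = 0 := by
    intro n hn
    simp only [Finset.mem_range, not_lt] at hn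
    have h1 : u (n+1) = 0 := hN _ (by omega)
    simp [hf, h1]
  have hgz : ∀ n ∉ Finset.range N, g n = 0 := by
    intro n hn
    simp only [Finset.mem_range, not_lt] at hn
    have h1 : u (n+1) = 0 := hN _ (by omega)
    simp [hg, h1]
  rw [tsum_eq_sum hfz, tsum_eq_sum hgz]
  -- auxiliary sequences
  set a : ℕ → ℝ := fun n => l ^ (n + 1) * l ^ ((2 * γ) * (n + 1 : ℕ)) * u n ^ 2 * u (n + 1)
    with ha
  set b : ℕ → ℝ := fun n => l ^ (n + 2) * l ^ ((2 * γ) * (n + 1 : ℕ)) * u (n + 1) ^ 2 * u (n + 2)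
    with hb
  have hsplit : ∀ n, -f n = a n - b n := by
    intro n; simp only [hf, ha, hb]; ring
  have hshift : ∑ n ∈ Finset.range N, a n = ∑ n ∈ Finset.range N, a (n + 1) := by
    have h1 : ∑ n ∈ Finset.range (N + 1), a n
        = ∑ n ∈ Finset.range N, a n + a N := Finset.sum_range_succ a N
    have h2 : ∑ n ∈ Finset.range (N + 1), a n
        = (∑ n ∈ Finset.range N, a (n + 1)) + a 0 := Finset.sum_range_succ' a N
    have haN : a N = 0 := by
      rcases Nat.eq_zero_or_pos N with h | h
      · simp [ha, h, hu0]
      · have : u N = 0 := hN N le_rfl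
        simp [ha, this]
    have ha0 : a 0 = 0 := by simp [ha, hu0]
    rw [haN, add_zero] at h1
    rw [ha0, add_zero] at h2
    rw [← h1, h2]
  have key : ∀ n : ℕ, a (n + 1) - b n = (l ^ (2 * γ + 1) - l) * g n := by
    intro n
    have e1 : l ^ (n + 1 + 1) * l ^ ((2 * γ) * ((n + 1 : ℕ) + 1 : ℕ))
        = l ^ (2 * γ + 1) * l ^ ((1 + 2 * γ) * (n + 1 : ℕ)) := by
      rw [← Real.rpow_natCast l (n + 1 + 1), ← Real.rpow_add hl0, ← Real.rpow_add hl0]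
      congr 1; push_cast; ring
    have e2 : l ^ (n + 2) * l ^ ((2 * γ) * (n + 1 : ℕ))
        = l * l ^ ((1 + 2 * γ) * (n + 1 : ℕ)) := by
      have : l = l ^ (1:ℝ) := (Real.rpow_one l).symm
      rw [← Real.rpow_natCast l (n + 2), ← Real.rpow_add hl0]
      nth_rewrite 2 [this]
      rw [← Real.rpow_add hl0]
      congr 1; push_cast; ring
    simp only [ha, hb, hg]
    linear_combination (u (n+1)^2 * u (n+2)) * e1 - (u (n+1)^2 * u (n+2)) * e2
  calc -∑ n ∈ Finset.range N, f n
      = ∑ n ∈ Finset.range N, (a n - b n) := by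
        rw [← Finset.sum_neg_distrib]; exact Finset.sum_congr rfl fun n _ => hsplit n
    _ = ∑ n ∈ Finset.range N, (a (n+1) - b n) := by
        rw [Finset.sum_sub_distrib, Finset.sum_sub_distrib, hshift]
    _ = ∑ n ∈ Finset.range N, (l ^ (2 * γ + 1) - l) * g n :=
        Finset.sum_congr rfl fun n _ => key n
    _ = (l ^ (2 * γ + 1) - l) * ∑ n ∈ Finset.range N, g n := by
        rw [Finset.mul_sum]
end

section
/- Let 0 < α < 1/3 and 0 < γ < 1 − 3α. Then with A = √(λ^ε − 1) where ε = 2 − 6α − 2γ > 0, every real sequence u satisfies Σ_{n=1}^∞ λ^{(1+2γ)n} |u_n|³ ≥ A · (Σ_{n=1}^∞ λ^{2(α+γ)n} u_n²)^{3/2}, provided the left-hand side is finite. -/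
/-- Inverted Sobolev-type estimate (Lemma `l:jensen`): for `0 < α < 1/3`,
`0 < γ < 1 - 3α`, `ε = 2 - 6α - 2γ`, `A = √(λ^ε - 1)`, one has
`Σ_{n≥1} λ^{(1+2γ)n}|u_n|³ ≥ A (Σ_{n≥1} λ^{2(α+γ)n} u_n²)^{3/2}`. -/
theorem stmt5 (l α γ : ℝ) (hl : 1 < l) (hα0 : 0 < α) (hα : α < 1/3)
    (hγ0 : 0 < γ) (hγ : γ < 1 - 3 * α) (u : ℕ → ℝ)
    (hsum : Summable (fun n : ℕ => l ^ ((1 + 2 * γ) * (n + 1 : ℕ)) * |u (n + 1)| ^ 3)) :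
    Real.sqrt (l ^ (2 - 6 * α - 2 * γ) - 1) *
        (∑' n : ℕ, l ^ ((2 * (α + γ)) * (n + 1 : ℕ)) * u (n + 1) ^ 2) ^ ((3:ℝ)/2)
      ≤ ∑' n : ℕ, l ^ ((1 + 2 * γ) * (n + 1 : ℕ)) * |u (n + 1)| ^ 3 := by

  have hl0 : (0:ℝ) < l := lt_trans one_pos hl
  have hε0 : (0:ℝ) < 2 - 6*α - 2*γ := by linarith
  set ε : ℝ := 2 - 6*α - 2*γ with hεdef
  have hε0' : (0:ℝ) < ε := hε0
  have hlε : 1 < l ^ ε := (Real.one_lt_rpow_iff_of_pos hl0).2 (Or.inl ⟨hl, hε0'⟩)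
  set f : ℕ → ℝ := fun n => l ^ ((2/3)*(1+2*γ)*((n:ℝ)+1)) * u (n+1) ^ 2 with hfdef
  set g : ℕ → ℝ := fun n => l ^ (-(ε/3)*((n:ℝ)+1)) with hgdef
  have hf0 : ∀ n, 0 ≤ f n := fun n => mul_nonneg (Real.rpow_nonneg hl0.le _) (sq_nonneg _)
  have hg0 : ∀ n, 0 ≤ g n := fun n => Real.rpow_nonneg hl0.le _
  have hf32 : ∀ n : ℕ, f n ^ ((3:ℝ)/2) = l ^ ((1 + 2 * γ) * (n + 1 : ℕ)) * |u (n + 1)| ^ 3 := by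
    intro n
    show (l ^ ((2/3)*(1+2*γ)*((n:ℝ)+1)) * u (n+1) ^ 2) ^ ((3:ℝ)/2) = _
    rw [Real.mul_rpow (Real.rpow_nonneg hl0.le _) (sq_nonneg _), ← Real.rpow_mul hl0.le,
      ← sq_abs (u (n+1)), ← Real.rpow_natCast |u (n+1)| 2, ← Real.rpow_mul (abs_nonneg _),
      show ((2:ℕ):ℝ) * (3/2) = ((3:ℕ):ℝ) by norm_num, Real.rpow_natCast]
    congr 1
    push_cast
    ring
  have hfg : ∀ n : ℕ, f n * g n = l ^ ((2 * (α + γ)) * (n + 1 : ℕ)) * u (n + 1) ^ 2 := by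
    intro n
    show l ^ ((2/3)*(1+2*γ)*((n:ℝ)+1)) * u (n+1) ^ 2 * l ^ (-(ε/3)*((n:ℝ)+1)) = _
    rw [mul_right_comm, ← Real.rpow_add hl0]
    congr 2
    rw [hεdef]
    push_cast
    ring
  have hg3 : ∀ n : ℕ, g n ^ (3:ℝ) = (l ^ (-ε)) ^ (n+1) := by
    intro n
    show (l ^ (-(ε/3)*((n:ℝ)+1))) ^ (3:ℝ) = _
    rw [← Real.rpow_mul hl0.le, ← Real.rpow_natCast (l ^ (-ε)) (n+1), ← Real.rpow_mul hl0.le]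
    congr 1
    push_cast
    ring
  have hr0 : 0 < l ^ (-ε) := Real.rpow_pos_of_pos hl0 _
  have hr1 : l ^ (-ε) < 1 := Real.rpow_lt_one_of_one_lt_of_neg hl (by linarith)
  have hgsum : Summable (fun n => g n ^ (3:ℝ)) := by
    simp only [hg3, pow_succ]
    exact (summable_geometric_of_lt_one hr0.le hr1).mul_right _
  have hfsum : Summable (fun n => f n ^ ((3:ℝ)/2)) := by
    simp only [hf32]; exact hsum
  have hG : ∑' n, g n ^ (3:ℝ) = (l ^ ε - 1)⁻¹ := by
    rw [tsum_congr hg3]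
    simp only [pow_succ]
    rw [tsum_mul_right, tsum_geometric_of_lt_one hr0.le hr1, Real.rpow_neg hl0.le, ← mul_inv]
    have hx : (0:ℝ) < l ^ ε := Real.rpow_pos_of_pos hl0 _
    congr 1
    field_simp
  have hpq : ((3:ℝ)/2).HolderConjugate 3 := ⟨by norm_num, by norm_num, by norm_num⟩
  have holder := Real.inner_le_Lp_mul_Lq_tsum_of_nonneg hpq hf0 hg0 hfsum hgsum
  set T : ℝ := ∑' n : ℕ, l ^ ((1 + 2 * γ) * (n + 1 : ℕ)) * |u (n + 1)| ^ 3 with hTdef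
  have hT0 : 0 ≤ T := tsum_nonneg fun n =>
    mul_nonneg (Real.rpow_nonneg hl0.le _) (pow_nonneg (abs_nonneg _) _)
  set S : ℝ := ∑' n : ℕ, l ^ ((2 * (α + γ)) * (n + 1 : ℕ)) * u (n + 1) ^ 2 with hSdef
  have hS0 : 0 ≤ S := tsum_nonneg fun n =>
    mul_nonneg (Real.rpow_nonneg hl0.le _) (sq_nonneg _)
  have hstep : S ≤ T ^ ((2:ℝ)/3) * ((l ^ ε - 1)⁻¹) ^ ((1:ℝ)/3) := by
    calc S = ∑' n, f n * g n := (tsum_congr hfg).symm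
      _ ≤ (∑' n, f n ^ ((3:ℝ)/2)) ^ (1/((3:ℝ)/2)) * (∑' n, g n ^ (3:ℝ)) ^ (1/(3:ℝ)) := holder
      _ = T ^ ((2:ℝ)/3) * ((l ^ ε - 1)⁻¹) ^ ((1:ℝ)/3) := by
          rw [tsum_congr hf32, hG, ← hTdef]
          norm_num
  have hinv0 : (0:ℝ) ≤ (l ^ ε - 1)⁻¹ := inv_nonneg.2 (by linarith)
  have h2 : S ^ ((3:ℝ)/2) ≤ T * ((l ^ ε - 1)⁻¹) ^ ((1:ℝ)/2) := by
    calc S ^ ((3:ℝ)/2) ≤ (T ^ ((2:ℝ)/3) * ((l ^ ε - 1)⁻¹) ^ ((1:ℝ)/3)) ^ ((3:ℝ)/2) :=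
          Real.rpow_le_rpow hS0 hstep (by norm_num)
      _ = T * ((l ^ ε - 1)⁻¹) ^ ((1:ℝ)/2) := by
          rw [Real.mul_rpow (Real.rpow_nonneg hT0 _) (Real.rpow_nonneg hinv0 _),
            ← Real.rpow_mul hT0, ← Real.rpow_mul hinv0]
          norm_num
  calc Real.sqrt (l ^ ε - 1) * S ^ ((3:ℝ)/2)
      ≤ Real.sqrt (l ^ ε - 1) * (T * ((l ^ ε - 1)⁻¹) ^ ((1:ℝ)/2)) :=
        mul_le_mul_of_nonneg_left h2 (Real.sqrt_nonneg _)
    _ = T := by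
        rw [Real.sqrt_eq_rpow, mul_comm T, ← mul_assoc,
          ← Real.mul_rpow (by linarith) hinv0,
          mul_inv_cancel₀ (by linarith : l ^ ε - (1:ℝ) ≠ 0), Real.one_rpow, one_mul]
end

section
/- Positivity is preserved: if u = (u_n) is a solution of the dyadic system du_n/dt = −ν λ^{2αn} u_n + λ^n u_{n−1}² − λ^{n+1} u_n u_{n+1} + g_n on [0, T] with each u_n ∈ C¹, each g_n ≥ 0, and u_n(0) ≥ 0 for all n, then u_n(t) ≥ 0 for all n and all t ∈ [0, T]. -/
open Set in
/-- Positivity is preserved: if `u_n ∈ C¹([0,T])` solve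
`u_n' = -ν λ^{2αn} u_n + λ^n u_{n-1}² - λ^{n+1} u_n u_{n+1} + g_n` (with `u_0 ≡ 0`),
`g_n ≥ 0`, and `u_n(0) ≥ 0` for all `n ≥ 1`, then `u_n(t) ≥ 0` on `[0,T]`. -/
theorem stmt10 (l ν α T : ℝ) (hl : 1 < l) (hν : 0 < ν) (hα : 0 < α) (hT : 0 < T)
    (g : ℕ → ℝ) (hg : ∀ n, 0 ≤ g n)
    (u : ℕ → ℝ → ℝ) (hu0 : ∀ t, u 0 t = 0)
    (hC1 : ∀ n, ContDiffOn ℝ 1 (u n) (Icc 0 T))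
    (hode : ∀ n : ℕ, ∀ t ∈ Icc 0 T,
      HasDerivWithinAt (u (n + 1))
        (-ν * l ^ ((2 * α) * (n + 1 : ℕ)) * u (n + 1) t
          + l ^ ((n + 1 : ℕ) : ℝ) * (u n t) ^ 2
          - l ^ ((n + 2 : ℕ) : ℝ) * u (n + 1) t * u (n + 2) t + g (n + 1))
        (Icc 0 T) t)
    (hinit : ∀ n : ℕ, 0 ≤ u (n + 1) 0) :
    ∀ n : ℕ, ∀ t ∈ Icc 0 T, 0 ≤ u (n + 1) t := by
  intro n t ht
  -- the linear coefficient
  set A : ℝ → ℝ := fun s => ν * l ^ ((2 * α) * (n + 1 : ℕ)) + l ^ ((n + 2 : ℕ) : ℝ) * u (n + 2) s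
    with hA
  have hAcont : ContinuousOn A (Icc 0 T) :=
    continuousOn_const.add (continuousOn_const.mul (hC1 (n + 2)).continuousOn)
  have hAint : ∀ s ∈ Icc (0 : ℝ) T, IntervalIntegrable A MeasureTheory.volume 0 s := by
    intro s hs
    apply ContinuousOn.intervalIntegrable
    apply hAcont.mono
    rw [uIcc_of_le hs.1]
    exact Icc_subset_Icc le_rfl hs.2
  -- the integrating factor exponent
  set Φ : ℝ → ℝ := fun s => ∫ x in (0 : ℝ)..s, A x with hΦ
  have hΦderiv : ∀ s ∈ Icc (0 : ℝ) T, HasDerivWithinAt Φ (A s) (Icc 0 T) s := by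
    intro s hs
    haveI : Fact (s ∈ Icc (0 : ℝ) T) := ⟨hs⟩
    exact intervalIntegral.integral_hasDerivWithinAt_right (hAint s hs)
      (AEStronglyMeasurable.stronglyMeasurableAtFilter_of_mem
        (hAcont.aestronglyMeasurable measurableSet_Icc) self_mem_nhdsWithin)
      (hAcont s hs)
  -- the auxiliary function w = u_{n+1} * exp Φ
  set w : ℝ → ℝ := fun s => u (n + 1) s * Real.exp (Φ s) with hw
  have hwderiv : ∀ s ∈ Icc (0 : ℝ) T,
      HasDerivWithinAt w
        (Real.exp (Φ s) * (l ^ ((n + 1 : ℕ) : ℝ) * (u n s) ^ 2 + g (n + 1))) (Icc 0 T) s := by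
    intro s hs
    have h1 := (hode n s hs).mul ((hΦderiv s hs).exp)
    refine (h1 : HasDerivWithinAt w _ (Icc 0 T) s).congr_deriv ?_
    simp only [hA]
    ring
  have hwcont : ContinuousOn w (Icc 0 T) := fun s hs =>
    (hwderiv s hs).continuousWithinAt
  have hmono : MonotoneOn w (Icc 0 T) := by
    apply monotoneOn_of_hasDerivWithinAt_nonneg (convex_Icc 0 T) hwcont
      (f' := fun s => Real.exp (Φ s) * (l ^ ((n + 1 : ℕ) : ℝ) * (u n s) ^ 2 + g (n + 1)))
    · intro s hs
      rw [interior_Icc] at hs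
      exact ((hwderiv s (Ioo_subset_Icc_self hs)).hasDerivAt
        (Icc_mem_nhds hs.1 hs.2)).hasDerivWithinAt
    · intro s hs
      have h1 : (0:ℝ) ≤ l ^ ((n + 1 : ℕ) : ℝ) := Real.rpow_nonneg (by linarith) _
      have h2 : (0:ℝ) ≤ g (n + 1) := hg (n + 1)
      positivity
  have hw0 : w 0 = u (n + 1) 0 := by
    simp [hw, hΦ]
  have h0mem : (0:ℝ) ∈ Icc (0:ℝ) T := ⟨le_rfl, hT.le⟩
  have hle : w 0 ≤ w t := hmono h0mem ht ht.1
  have hwt : 0 ≤ w t := le_trans (by rw [hw0]; exact hinit n) hle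
  have hexp : 0 < Real.exp (Φ t) := Real.exp_pos _
  have : w t = u (n + 1) t * Real.exp (Φ t) := rfl
  nlinarith [hwt, hexp, this]
end

section
/- Energy equality for α ≥ 1/2: if u is a solution of the dyadic model with α ≥ 1/2, u_n(t) bounded uniformly by R on [t₀, t], and ∫_{t₀}^t ‖u(τ)‖² dτ < ∞ where ‖u‖² = Σ_n λ^{2αn} u_n², then the boundary flux vanishes: ∫_{t₀}^t λ^{N+1} u_N(τ)² u_{N+1}(τ) dτ → 0 as N → ∞, and consequently |u(t)|² + 2ν ∫_{t₀}^t ‖u(τ)‖² dτ = |u(t₀)|² + 2∫_{t₀}^t (g, u(τ)) dτ. -/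
private lemma absmul_le_half_sq_add_sq (a b : ℝ) : |a * b| ≤ (a^2 + b^2)/2 := by
  rw [abs_mul]
  nlinarith [sq_nonneg (|a| - |b|), sq_abs a, sq_abs b, abs_nonneg a, abs_nonneg b]

open Set in
/-- Energy equality for `α ≥ 1/2`: for a solution of the dyadic model bounded by `R`
in `ℓ²` on `[t₀,t]` with `∫_{t₀}^t ‖u‖² dτ < ∞`, the boundary flux
`∫_{t₀}^t λ^{N+1} u_N² u_{N+1} dτ → 0` as `N → ∞`, and the energy equality
`|u(t)|² + 2ν ∫_{t₀}^t ‖u‖² dτ = |u(t₀)|² + 2 ∫_{t₀}^t (g,u) dτ` holds. -/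
theorem stmt16 (l ν α t₀ t R : ℝ) (hl : 1 < l) (hν : 0 < ν) (hα : 1/2 ≤ α)
    (ht : t₀ ≤ t) (hR : 0 ≤ R)
    (g : ℕ → ℝ) (hg : ∀ n, 0 ≤ g n) (hgl2 : Summable (fun n => g n ^ 2))
    (u : ℕ → ℝ → ℝ) (hu0 : ∀ s, u 0 s = 0)
    (hode : ∀ n : ℕ, ∀ τ ∈ Icc t₀ t,
      HasDerivAt (u (n + 1))
        (-ν * l ^ ((2 * α) * (n + 1 : ℕ)) * u (n + 1) τ
          + l ^ ((n + 1 : ℕ) : ℝ) * (u n τ) ^ 2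
          - l ^ ((n + 2 : ℕ) : ℝ) * u (n + 1) τ * u (n + 2) τ + g (n + 1)) τ)
    (hl2 : ∀ τ ∈ Icc t₀ t, Summable (fun n : ℕ => u (n + 1) τ ^ 2))
    (hbound : ∀ τ ∈ Icc t₀ t, (∑' n : ℕ, u (n + 1) τ ^ 2) ≤ R ^ 2)
    (hVsummable : ∀ τ ∈ Icc t₀ t,
      Summable (fun n : ℕ => l ^ ((2 * α) * (n + 1 : ℕ)) * u (n + 1) τ ^ 2))
    (hVint : IntervalIntegrable
      (fun τ => ∑' n : ℕ, l ^ ((2 * α) * (n + 1 : ℕ)) * u (n + 1) τ ^ 2)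
      MeasureTheory.volume t₀ t) :
    Filter.Tendsto
        (fun N : ℕ => ∫ τ in t₀..t, l ^ ((N + 2 : ℕ) : ℝ) * u (N + 1) τ ^ 2 * u (N + 2) τ)
        Filter.atTop (nhds 0)
      ∧ (∑' n : ℕ, u (n + 1) t ^ 2)
          + 2 * ν * (∫ τ in t₀..t, ∑' n : ℕ, l ^ ((2 * α) * (n + 1 : ℕ)) * u (n + 1) τ ^ 2)
        = (∑' n : ℕ, u (n + 1) t₀ ^ 2)
          + 2 * ∫ τ in t₀..t, ∑' n : ℕ, g (n + 1) * u (n + 1) τ := by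
  have hl0 : (0:ℝ) < l := lt_trans one_pos hl
  have htmem : t ∈ Icc t₀ t := right_mem_Icc.mpr ht
  have ht0mem : t₀ ∈ Icc t₀ t := left_mem_Icc.mpr ht
  have huIcc : uIcc t₀ t = Icc t₀ t := uIcc_of_le ht
  have huIoc : uIoc t₀ t ⊆ Icc t₀ t := by
    rw [uIoc_of_le ht]; exact Ioc_subset_Icc_self
  -- continuity of each component
  have hucont : ∀ n : ℕ, ContinuousOn (u n) (Icc t₀ t) := by
    intro n
    cases n with
    | zero => simpa [funext hu0] using continuousOn_const
    | succ m => exact fun τ hτ => ((hode m τ hτ).continuousAt).continuousWithinAt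
  -- pointwise bound |u (n+1) τ| ≤ R
  have huabs : ∀ n : ℕ, ∀ τ ∈ Icc t₀ t, |u (n + 1) τ| ≤ R := by
    intro n τ hτ
    have h1 : u (n+1) τ ^ 2 ≤ ∑' m : ℕ, u (m + 1) τ ^ 2 :=
      Summable.le_tsum (hl2 τ hτ) n (fun m _ => sq_nonneg _)
    have h2 := hbound τ hτ
    have h3 : u (n+1) τ ^ 2 ≤ R ^ 2 := le_trans h1 h2
    exact abs_le.mpr (abs_le_of_sq_le_sq' h3 hR)
  -- key exponent inequality
  have hpow : ∀ N : ℕ, l ^ ((N + 2 : ℕ) : ℝ) ≤ l * l ^ ((2*α) * ((N:ℕ) + 1 : ℕ)) := by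
    intro N
    have h0 : ((N+2:ℕ):ℝ) = 1 + ((N+1:ℕ):ℝ) := by push_cast; ring
    rw [h0, Real.rpow_add hl0, Real.rpow_one]
    have h2 : l ^ ((N + 1 : ℕ) : ℝ) ≤ l ^ ((2*α) * (N + 1 : ℕ)) := by
      apply Real.rpow_le_rpow_left_iff hl |>.mpr
      have : (1:ℝ) ≤ 2*α := by linarith
      nlinarith [Nat.cast_nonneg (α := ℝ) (N+1)]
    nlinarith [Real.rpow_pos_of_pos hl0 ((N+1:ℕ):ℝ)]
  -- abbreviations
  set D : ℕ → ℝ → ℝ :=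
    fun N τ => ∑ n ∈ Finset.range (N+1), l ^ ((2*α) * (n + 1 : ℕ)) * u (n+1) τ ^ 2 with hD
  set G : ℕ → ℝ → ℝ :=
    fun N τ => ∑ n ∈ Finset.range (N+1), g (n+1) * u (n+1) τ with hG
  set F : ℕ → ℝ → ℝ :=
    fun N τ => l ^ ((N + 2 : ℕ) : ℝ) * u (N + 1) τ ^ 2 * u (N + 2) τ with hF
  set E : ℕ → ℝ → ℝ := fun N τ => ∑ n ∈ Finset.range (N+1), u (n+1) τ ^ 2 with hE
  set V : ℝ → ℝ := fun τ => ∑' n : ℕ, l ^ ((2*α) * (n + 1 : ℕ)) * u (n+1) τ ^ 2 with hV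
  set GU : ℝ → ℝ := fun τ => ∑' n : ℕ, g (n+1) * u (n+1) τ with hGU
  -- continuity of the pieces
  have hDcont : ∀ N, ContinuousOn (D N) (Icc t₀ t) := by
    intro N
    exact continuousOn_finset_sum _ fun n _ =>
      (continuousOn_const.mul ((hucont (n+1)).pow 2))
  have hGcont : ∀ N, ContinuousOn (G N) (Icc t₀ t) := by
    intro N
    exact continuousOn_finset_sum _ fun n _ => continuousOn_const.mul (hucont (n+1))
  have hFcont : ∀ N, ContinuousOn (F N) (Icc t₀ t) := by
    intro N
    exact (continuousOn_const.mul ((hucont (N+1)).pow 2)).mul (hucont (N+2))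
  have hDint : ∀ N, IntervalIntegrable (D N) MeasureTheory.volume t₀ t := by
    intro N; exact ((hDcont N).mono (by rw [huIcc])).intervalIntegrable
  have hGint : ∀ N, IntervalIntegrable (G N) MeasureTheory.volume t₀ t := by
    intro N; exact ((hGcont N).mono (by rw [huIcc])).intervalIntegrable
  have hFint : ∀ N, IntervalIntegrable (F N) MeasureTheory.volume t₀ t := by
    intro N; exact ((hFcont N).mono (by rw [huIcc])).intervalIntegrable
  -- derivative of partial energy
  have hEderiv : ∀ N : ℕ, ∀ τ ∈ Icc t₀ t,
      HasDerivAt (E N) (-(2*ν) * D N τ + 2 * G N τ - 2 * F N τ) τ := by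
    intro N τ hτ
    have h1 : HasDerivAt (E N)
        (∑ n ∈ Finset.range (N+1), (((2:ℕ):ℝ) * u (n+1) τ ^ (2-1) *
          (-ν * l ^ ((2 * α) * (n + 1 : ℕ)) * u (n + 1) τ
            + l ^ ((n + 1 : ℕ) : ℝ) * (u n τ) ^ 2
            - l ^ ((n + 2 : ℕ) : ℝ) * u (n + 1) τ * u (n + 2) τ + g (n + 1)))) τ :=
      HasDerivAt.fun_sum fun n _ => (hode n τ hτ).pow 2
    convert h1 using 1
    set b : ℕ → ℝ := fun n => l ^ ((n + 1 : ℕ) : ℝ) * u n τ ^ 2 * u (n+1) τ with hb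
    have tele : ∑ n ∈ Finset.range (N+1), (b n - b (n+1)) = b 0 - b (N+1) :=
      Finset.sum_range_sub' b (N+1)
    have hsplit : ∀ n ∈ Finset.range (N+1),
        ((2:ℕ):ℝ) * u (n+1) τ ^ (2-1) *
          (-ν * l ^ ((2 * α) * (n + 1 : ℕ)) * u (n + 1) τ
            + l ^ ((n + 1 : ℕ) : ℝ) * (u n τ) ^ 2
            - l ^ ((n + 2 : ℕ) : ℝ) * u (n + 1) τ * u (n + 2) τ + g (n + 1))
        = -(2*ν) * (l ^ ((2*α) * (n + 1 : ℕ)) * u (n+1) τ ^ 2)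
          + 2 * (g (n+1) * u (n+1) τ) + 2 * (b n - b (n+1)) := by
      intro n _
      simp only [hb]
      push_cast
      ring_nf
    rw [Finset.sum_congr rfl hsplit, Finset.sum_add_distrib, Finset.sum_add_distrib,
      ← Finset.mul_sum, ← Finset.mul_sum, ← Finset.mul_sum, tele]
    have hb0 : b 0 = 0 := by simp [hb, hu0]
    have hbN : b (N+1) = l ^ ((N + 2 : ℕ) : ℝ) * u (N + 1) τ ^ 2 * u (N + 2) τ := rfl
    rw [hb0, hbN]
    simp only [hD, hG, hF]
    ring
  -- fundamental theorem of calculus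
  have key : ∀ N : ℕ,
      E N t - E N t₀ = -(2*ν) * (∫ τ in t₀..t, D N τ) + 2 * (∫ τ in t₀..t, G N τ)
        - 2 * (∫ τ in t₀..t, F N τ) := by
    intro N
    have hint : IntervalIntegrable (fun τ => -(2*ν) * D N τ + 2 * G N τ - 2 * F N τ)
        MeasureTheory.volume t₀ t :=
      (((hDint N).const_mul (-(2*ν))).add ((hGint N).const_mul 2)).sub ((hFint N).const_mul 2)
    have hftc := intervalIntegral.integral_eq_sub_of_hasDerivAt
      (f := E N) (f' := fun τ => -(2*ν) * D N τ + 2 * G N τ - 2 * F N τ)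
      (fun τ hτ => hEderiv N τ (huIcc ▸ hτ)) hint
    rw [← hftc, intervalIntegral.integral_sub (((hDint N).const_mul (-(2*ν))).add
        ((hGint N).const_mul 2)) ((hFint N).const_mul 2),
      intervalIntegral.integral_add ((hDint N).const_mul (-(2*ν))) ((hGint N).const_mul 2),
      intervalIntegral.integral_const_mul, intervalIntegral.integral_const_mul,
      intervalIntegral.integral_const_mul]
  -- limits
  have hDlim : Filter.Tendsto (fun N => ∫ τ in t₀..t, D N τ) Filter.atTop
      (nhds (∫ τ in t₀..t, V τ)) := by
    apply intervalIntegral.tendsto_integral_filter_of_dominated_convergence V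
    · exact Filter.Eventually.of_forall fun N =>
        (((hDcont N).mono huIoc).aestronglyMeasurable measurableSet_uIoc)
    · refine Filter.Eventually.of_forall fun N => MeasureTheory.ae_of_all _ fun τ hτ => ?_
      have hτ' := huIoc hτ
      have hnn : ∀ n : ℕ, 0 ≤ l ^ ((2*α) * (n + 1 : ℕ)) * u (n+1) τ ^ 2 := fun n =>
        mul_nonneg (Real.rpow_pos_of_pos hl0 _).le (sq_nonneg _)
      have hDnn : 0 ≤ D N τ := Finset.sum_nonneg fun n _ => hnn n
      rw [Real.norm_eq_abs, abs_of_nonneg hDnn]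
      exact Summable.sum_le_tsum (Finset.range (N+1)) (fun n _ => hnn n) (hVsummable τ hτ')
    · exact hVint
    · refine MeasureTheory.ae_of_all _ fun τ hτ => ?_
      have hτ' := huIoc hτ
      exact ((hVsummable τ hτ').hasSum.tendsto_sum_nat).comp (Filter.tendsto_add_atTop_nat 1)
  have hg2' : Summable (fun n : ℕ => g (n+1) ^ 2) := (summable_nat_add_iff 1).mpr hgl2
  have habs : ∀ τ ∈ Icc t₀ t, Summable (fun n : ℕ => |g (n+1) * u (n+1) τ|) := by
    intro τ hτ
    exact Summable.of_nonneg_of_le (fun n => abs_nonneg _)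
      (fun n => absmul_le_half_sq_add_sq (g (n+1)) (u (n+1) τ))
      ((hg2'.add (hl2 τ hτ)).div_const 2)
  have hgusum : ∀ τ ∈ Icc t₀ t, Summable (fun n : ℕ => g (n+1) * u (n+1) τ) := by
    intro τ hτ
    exact (habs τ hτ).of_abs
  have hGbound : ∀ N : ℕ, ∀ τ ∈ Icc t₀ t,
      ‖G N τ‖ ≤ ((∑' n : ℕ, g (n+1) ^ 2) + R ^ 2)/2 := by
    intro N τ hτ
    calc ‖G N τ‖ ≤ ∑ n ∈ Finset.range (N+1), |g (n+1) * u (n+1) τ| := by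
          simp only [hG, Real.norm_eq_abs]
          exact Finset.abs_sum_le_sum_abs _ _
      _ ≤ ∑' n : ℕ, |g (n+1) * u (n+1) τ| :=
          Summable.sum_le_tsum _ (fun n _ => abs_nonneg _) (habs τ hτ)
      _ ≤ ∑' n : ℕ, (g (n+1) ^ 2 + u (n+1) τ ^ 2)/2 := by
          exact Summable.tsum_le_tsum (fun n => absmul_le_half_sq_add_sq (g (n+1)) (u (n+1) τ))
            (habs τ hτ) ((hg2'.add (hl2 τ hτ)).div_const 2)
      _ = ((∑' n : ℕ, g (n+1) ^ 2) + ∑' n : ℕ, u (n+1) τ ^ 2)/2 := by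
          rw [tsum_div_const, Summable.tsum_add hg2' (hl2 τ hτ)]
      _ ≤ ((∑' n : ℕ, g (n+1) ^ 2) + R ^ 2)/2 := by
          have := hbound τ hτ; linarith
  have hGlim : Filter.Tendsto (fun N => ∫ τ in t₀..t, G N τ) Filter.atTop
      (nhds (∫ τ in t₀..t, GU τ)) := by
    apply intervalIntegral.tendsto_integral_filter_of_dominated_convergence
      (fun _ => ((∑' n : ℕ, g (n+1) ^ 2) + R ^ 2)/2)
    · exact Filter.Eventually.of_forall fun N =>
        (((hGcont N).mono huIoc).aestronglyMeasurable measurableSet_uIoc)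
    · exact Filter.Eventually.of_forall fun N => MeasureTheory.ae_of_all _ fun τ hτ =>
        hGbound N τ (huIoc hτ)
    · exact intervalIntegrable_const
    · refine MeasureTheory.ae_of_all _ fun τ hτ => ?_
      exact ((hgusum τ (huIoc hτ)).hasSum.tendsto_sum_nat).comp
        (Filter.tendsto_add_atTop_nat 1)
  set a : ℕ → ℝ := fun k => ∫ τ in t₀..t, l ^ ((2*α) * (k + 1 : ℕ)) * u (k+1) τ ^ 2 with ha
  have hacont : ∀ k : ℕ, ContinuousOn (fun τ => l ^ ((2*α) * (k + 1 : ℕ)) * u (k+1) τ ^ 2)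
      (Icc t₀ t) := fun k => continuousOn_const.mul ((hucont (k+1)).pow 2)
  have haint : ∀ k : ℕ, IntervalIntegrable
      (fun τ => l ^ ((2*α) * (k + 1 : ℕ)) * u (k+1) τ ^ 2) MeasureTheory.volume t₀ t :=
    fun k => ((hacont k).mono (by rw [huIcc])).intervalIntegrable
  have hSD : ∀ N : ℕ, (∫ τ in t₀..t, D (N+1) τ) = (∫ τ in t₀..t, D N τ) + a (N+1) := by
    intro N
    rw [ha, ← intervalIntegral.integral_add (hDint N) (haint (N+1))]
    apply intervalIntegral.integral_congr
    intro τ _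
    simp [hD, Finset.sum_range_succ]
  have ha0 : Filter.Tendsto a Filter.atTop (nhds 0) := by
    rw [← Filter.tendsto_add_atTop_iff_nat 1]
    have h1 : Filter.Tendsto (fun N => (∫ τ in t₀..t, D (N+1) τ) - (∫ τ in t₀..t, D N τ))
        Filter.atTop (nhds ((∫ τ in t₀..t, V τ) - (∫ τ in t₀..t, V τ))) :=
      (hDlim.comp (Filter.tendsto_add_atTop_nat 1)).sub hDlim
    rw [sub_self] at h1
    refine h1.congr fun N => ?_
    rw [hSD N]; ring
  have hFlim : Filter.Tendsto (fun N => ∫ τ in t₀..t, F N τ) Filter.atTop (nhds 0) := by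
    refine squeeze_zero_norm (a := fun N => (l * R) * a N) ?_ ?_
    · intro N
      have hFa : |∫ τ in t₀..t, F N τ| ≤ ∫ τ in t₀..t, |F N τ| :=
        intervalIntegral.abs_integral_le_integral_abs ht
      have hmono : (∫ τ in t₀..t, |F N τ|)
          ≤ ∫ τ in t₀..t, (l * R) * (l ^ ((2*α) * (N + 1 : ℕ)) * u (N+1) τ ^ 2) := by
        apply intervalIntegral.integral_mono_on ht (hFint N).abs ((haint N).const_mul (l*R))
        intro τ hτ
        have h1 := huabs (N+1) τ hτ
        have h2 := hpow N
        have h3 : (0:ℝ) < l ^ ((N + 2 : ℕ) : ℝ) := Real.rpow_pos_of_pos hl0 _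
        have h4 : (0:ℝ) < l ^ ((2*α) * (N + 1 : ℕ)) := Real.rpow_pos_of_pos hl0 _
        have h5 : |F N τ| = l ^ ((N + 2 : ℕ) : ℝ) * u (N+1) τ ^ 2 * |u (N+2) τ| := by
          rw [hF, abs_mul, abs_mul, abs_of_pos h3, abs_of_nonneg (sq_nonneg _)]
        rw [h5]
        have step1 : l ^ ((N + 2 : ℕ) : ℝ) * u (N+1) τ ^ 2 * |u (N+2) τ|
            ≤ l ^ ((N + 2 : ℕ) : ℝ) * u (N+1) τ ^ 2 * R :=
          mul_le_mul_of_nonneg_left h1 (mul_nonneg h3.le (sq_nonneg _))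
        have step2 : l ^ ((N + 2 : ℕ) : ℝ) * u (N+1) τ ^ 2 * R
            ≤ (l * l ^ ((2*α) * (N + 1 : ℕ))) * u (N+1) τ ^ 2 * R :=
          mul_le_mul_of_nonneg_right (mul_le_mul_of_nonneg_right h2 (sq_nonneg _)) hR
        calc l ^ ((N + 2 : ℕ) : ℝ) * u (N+1) τ ^ 2 * |u (N+2) τ|
            ≤ l ^ ((N + 2 : ℕ) : ℝ) * u (N+1) τ ^ 2 * R := step1
          _ ≤ (l * l ^ ((2*α) * (N + 1 : ℕ))) * u (N+1) τ ^ 2 * R := step2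
          _ = (l * R) * (l ^ ((2*α) * (N + 1 : ℕ)) * u (N+1) τ ^ 2) := by ring
      rw [intervalIntegral.integral_const_mul] at hmono
      rw [Real.norm_eq_abs]
      calc |∫ τ in t₀..t, F N τ| ≤ ∫ τ in t₀..t, |F N τ| := hFa
        _ ≤ (l * R) * a N := hmono
    · simpa only [mul_zero] using ha0.const_mul (l * R)
  have hEt : Filter.Tendsto (fun N => E N t) Filter.atTop
      (nhds (∑' n : ℕ, u (n + 1) t ^ 2)) :=
    ((hl2 t htmem).hasSum.tendsto_sum_nat).comp (Filter.tendsto_add_atTop_nat 1)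
  have hEt0 : Filter.Tendsto (fun N => E N t₀) Filter.atTop
      (nhds (∑' n : ℕ, u (n + 1) t₀ ^ 2)) :=
    ((hl2 t₀ ht0mem).hasSum.tendsto_sum_nat).comp (Filter.tendsto_add_atTop_nat 1)
  constructor
  · exact hFlim
  · have hLHS : Filter.Tendsto (fun N => E N t + 2 * ν * (∫ τ in t₀..t, D N τ))
        Filter.atTop (nhds ((∑' n : ℕ, u (n + 1) t ^ 2) + 2 * ν * (∫ τ in t₀..t, V τ))) :=
      hEt.add (hDlim.const_mul (2*ν))
    have hRHS : Filter.Tendsto (fun N => E N t + 2 * ν * (∫ τ in t₀..t, D N τ))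
        Filter.atTop (nhds ((∑' n : ℕ, u (n + 1) t₀ ^ 2) + 2 * (∫ τ in t₀..t, GU τ))) := by
      have heq : (fun N => E N t + 2 * ν * (∫ τ in t₀..t, D N τ))
          = fun N => E N t₀ + 2 * (∫ τ in t₀..t, G N τ) - 2 * (∫ τ in t₀..t, F N τ) := by
        funext N
        have := key N
        linarith
      rw [heq]
      have h2 : Filter.Tendsto
          (fun N => E N t₀ + 2 * (∫ τ in t₀..t, G N τ) - 2 * (∫ τ in t₀..t, F N τ))
          Filter.atTop
          (nhds ((∑' n : ℕ, u (n + 1) t₀ ^ 2) + 2 * (∫ τ in t₀..t, GU τ) - 2 * 0)) :=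
        (hEt0.add (hGlim.const_mul 2)).sub (hFlim.const_mul 2)
      simpa using h2
    exact tendsto_nhds_unique hLHS hRHS
end

section
/- Continuity of the cross-term series: let u_n : [0, ∞) → ℝ be continuous functions, γ > 0, λ > 1, and suppose t ↦ Σ_{n=1}^∞ λ^{2γn} u_n(t)² is finite and continuous on [0, ∞). Then t ↦ Σ_{n=1}^∞ λ^{2γn} u_n(t) u_{n+1}(t) is continuous on [0, ∞). -/
open Set Filter Topology Finset

set_option maxHeartbeats 1000000 in
open Set in
/-- Continuity of the cross-term series (Lemma `l:contnnp1`): if each `u_n` is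
continuous and `t ↦ Σ_{n≥1} λ^{2γn} u_n(t)²` is finite and continuous on `[0,∞)`,
then `t ↦ Σ_{n≥1} λ^{2γn} u_n(t) u_{n+1}(t)` is continuous on `[0,∞)`. -/
theorem stmt18 (l γ : ℝ) (hl : 1 < l) (hγ : 0 < γ) (u : ℕ → ℝ → ℝ)
    (hcont : ∀ n, Continuous (u n))
    (hsum : ∀ t ∈ Ici (0:ℝ),
      Summable (fun n : ℕ => l ^ ((2 * γ) * (n + 1 : ℕ)) * u (n + 1) t ^ 2))
    (hφ : ContinuousOn
      (fun t => ∑' n : ℕ, l ^ ((2 * γ) * (n + 1 : ℕ)) * u (n + 1) t ^ 2) (Ici 0)) :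
    ContinuousOn
      (fun t => ∑' n : ℕ, l ^ ((2 * γ) * (n + 1 : ℕ)) * u (n + 1) t * u (n + 2) t)
      (Ici 0) := by
  have hl0 : (0:ℝ) < l := lt_trans one_pos hl
  set b : ℕ → ℝ → ℝ := fun n t => l ^ ((2 * γ) * (n + 1 : ℕ)) * u (n + 1) t ^ 2 with hbdef
  set c : ℕ → ℝ → ℝ :=
    fun n t => l ^ ((2 * γ) * (n + 1 : ℕ)) * u (n + 1) t * u (n + 2) t with hcdef
  have hbnonneg : ∀ n t, 0 ≤ b n t := by
    intro n t
    have := Real.rpow_pos_of_pos hl0 ((2 * γ) * (n + 1 : ℕ))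
    positivity
  have hone : (1:ℝ) ≤ l ^ (2 * γ) := Real.one_le_rpow hl.le (by positivity)
  -- key pointwise bound
  have hcb : ∀ n t, |c n t| ≤ b n t + b (n + 1) t := by
    intro n t
    have hL : 0 < l ^ ((2 * γ) * (n + 1 : ℕ)) := Real.rpow_pos_of_pos hl0 _
    have hsplit : l ^ ((2 * γ) * ((n + 1) + 1 : ℕ)) =
        l ^ ((2 * γ) * (n + 1 : ℕ)) * l ^ (2 * γ) := by
      rw [← Real.rpow_add hl0]
      push_cast
      ring_nf
    have habs : |c n t| = l ^ ((2 * γ) * (n + 1 : ℕ)) * (|u (n + 1) t| * |u (n + 2) t|) := by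
      show |l ^ ((2 * γ) * (n + 1 : ℕ)) * u (n + 1) t * u (n + 2) t| = _
      rw [mul_assoc, abs_mul, abs_mul, abs_of_pos hL]
    have h1 : |u (n + 1) t| * |u (n + 2) t| ≤ (u (n + 1) t ^ 2 + u (n + 2) t ^ 2) / 2 := by
      nlinarith [sq_nonneg (|u (n + 1) t| - |u (n + 2) t|), sq_abs (u (n + 1) t),
        sq_abs (u (n + 2) t)]
    have hb1 : b (n + 1) t = l ^ ((2 * γ) * (n + 1 : ℕ)) * l ^ (2 * γ) * u (n + 2) t ^ 2 := by
      rw [hbdef]; simp only []; rw [hsplit]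
    rw [habs, hbdef]
    simp only [hb1]
    nlinarith [sq_nonneg (u (n + 2) t), mul_le_mul_of_nonneg_left h1 hL.le,
      mul_nonneg hL.le (sq_nonneg (u (n + 2) t))]
  -- summability of |c|
  have hsumb' : ∀ t ∈ Ici (0:ℝ), Summable (fun n => b (n + 1) t) :=
    fun t ht => (summable_nat_add_iff 1).2 (hsum t ht)
  have hsumabs : ∀ t ∈ Ici (0:ℝ), Summable (fun n => |c n t|) := by
    intro t ht
    exact Summable.of_nonneg_of_le (fun n => abs_nonneg _) (fun n => hcb n t)
      ((hsum t ht).add (hsumb' t ht))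
  have hsumc : ∀ t ∈ Ici (0:ℝ), Summable (fun n => c n t) :=
    fun t ht => (hsumabs t ht).of_abs
  -- tail function
  set T : ℕ → ℝ → ℝ := fun N t => ∑' n, b (n + N) t with hTdef
  have hTnonneg : ∀ N t, 0 ≤ T N t := fun N t => tsum_nonneg (fun n => hbnonneg _ t)
  have hTmono : ∀ N t, t ∈ Ici (0:ℝ) → T (N + 1) t ≤ T N t := by
    intro N t ht
    have hs : Summable (fun n => b (n + N) t) := (summable_nat_add_iff N).2 (hsum t ht)
    have := Summable.sum_add_tsum_nat_add (f := fun n => b (n + N) t) 1 hs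
    have he : T (N + 1) t = ∑' n, b (n + 1 + N) t := by
      rw [hTdef]
      exact tsum_congr fun n => by ring_nf
    have h0 : T N t = ∑ i ∈ range 1, b (i + N) t + ∑' n, b (n + 1 + N) t := this.symm
    rw [he, h0]
    simp [hbnonneg]
  have hTeq : ∀ N, ∀ t ∈ Ici (0:ℝ),
      T N t = (∑' n : ℕ, b n t) - ∑ i ∈ range N, b i t := by
    intro N t ht
    have := Summable.sum_add_tsum_nat_add (f := fun n => b n t) N (hsum t ht)
    rw [hTdef]; linarith [this]
  -- tail bound for the cross series
  have hkey : ∀ N, ∀ t ∈ Ici (0:ℝ),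
      |(∑' n, c n t) - ∑ i ∈ range N, c i t| ≤ 2 * T N t := by
    intro N t ht
    have h1 : (∑' n, c n t) - ∑ i ∈ range N, c i t = ∑' n, c (n + N) t := by
      have := Summable.sum_add_tsum_nat_add (f := fun n => c n t) N (hsumc t ht)
      linarith [this]
    rw [h1]
    have hs1 : Summable (fun n => |c (n + N) t|) := (summable_nat_add_iff N).2 (hsumabs t ht)
    have hs2 : Summable (fun n => b (n + N) t) := (summable_nat_add_iff N).2 (hsum t ht)
    have hs3 : Summable (fun n => b (n + N + 1) t) :=
      (summable_nat_add_iff (N + 1)).2 (hsum t ht) |>.congr (fun n => by simp only [hbdef]; ring_nf)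
    calc |∑' n, c (n + N) t| ≤ ∑' n, |c (n + N) t| := by
          simpa using norm_tsum_le_tsum_norm (f := fun n => c (n + N) t) (by simpa using hs1)
      _ ≤ ∑' n, (b (n + N) t + b (n + N + 1) t) :=
          Summable.tsum_le_tsum (fun n => hcb (n + N) t) hs1 (hs2.add hs3)
      _ = T N t + ∑' n, b (n + N + 1) t := Summable.tsum_add hs2 hs3
      _ ≤ T N t + T (N + 1) t := by
          have : (∑' n, b (n + N + 1) t) = T (N + 1) t := by
            rw [hTdef]; exact tsum_congr fun n => by ring_nf
          rw [this]
      _ ≤ 2 * T N t := by linarith [hTmono N t ht]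
  -- continuity of tails on Ici 0
  have hTcont : ∀ N, ContinuousOn (T N) (Ici (0:ℝ)) := by
    intro N
    have : ContinuousOn (fun t => (∑' n : ℕ, b n t) - ∑ i ∈ range N, b i t) (Ici 0) := by
      apply hφ.sub
      apply Continuous.continuousOn
      apply continuous_finset_sum
      intro i _
      have hc := (hcont (i + 1)).pow 2
      exact continuous_const.mul hc
    exact this.congr (fun t ht => hTeq N t ht)
  -- partial sums continuous
  have hScont : ∀ N, Continuous (fun t => ∑ i ∈ range N, c i t) := by
    intro N
    apply continuous_finset_sum
    intro i _
    exact (continuous_const.mul (hcont (i + 1))).mul (hcont (i + 2))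
  -- main argument
  intro t₀ ht₀
  rw [ContinuousWithinAt, Metric.tendsto_nhds]
  intro ε hε
  -- choose N with small tail at t₀
  obtain ⟨N, hN⟩ : ∃ N, T N t₀ < ε / 8 := by
    have h1 : Tendsto (fun N => ∑ i ∈ range N, b i t₀) atTop (𝓝 (∑' n, b n t₀)) :=
      (hsum t₀ ht₀).hasSum.tendsto_sum_nat
    have h2 : Tendsto (fun N => T N t₀) atTop (𝓝 0) := by
      have := (tendsto_const_nhds (x := ∑' n, b n t₀) (f := atTop)).sub h1
      simp only [sub_self] at this
      refine Tendsto.congr (fun N => (hTeq N t₀ ht₀).symm) this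
    exact (h2.eventually (gt_mem_nhds (by linarith : (0:ℝ) < ε / 8))).exists
  have hTev : ∀ᶠ t in 𝓝[Ici 0] t₀, T N t < ε / 4 := by
    have := (hTcont N t₀ ht₀).tendsto
    exact this.eventually (gt_mem_nhds (by linarith))
  have hSev : ∀ᶠ t in 𝓝[Ici 0] t₀,
      dist (∑ i ∈ range N, c i t) (∑ i ∈ range N, c i t₀) < ε / 8 :=
    Metric.tendsto_nhds.1 ((hScont N).continuousWithinAt (s := Ici (0:ℝ)) (x := t₀))
      (ε / 8) (by linarith)
  filter_upwards [hTev, hSev, self_mem_nhdsWithin] with t hT hS ht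
  rw [Real.dist_eq] at hS
  have hb1 := hkey N t ht
  have hb2 := hkey N t₀ ht₀
  rw [Real.dist_eq]
  calc |(∑' n, c n t) - ∑' n, c n t₀|
      ≤ |(∑' n, c n t) - ∑ i ∈ range N, c i t| +
        |(∑ i ∈ range N, c i t) - ∑ i ∈ range N, c i t₀| +
        |(∑ i ∈ range N, c i t₀) - ∑' n, c n t₀| := by
        have := abs_sub_le ((∑' n, c n t)) (∑ i ∈ range N, c i t) (∑' n, c n t₀)
        have h2 := abs_sub_le ((∑ i ∈ range N, c i t)) (∑ i ∈ range N, c i t₀) (∑' n, c n t₀)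
        linarith
    _ < ε := by
        rw [abs_sub_comm (∑ i ∈ range N, c i t₀)] at *
        linarith
end

section
/- Local Riccati bound implies no integrable blow-up for α ≥ 1/2: if y : [0, t*) → [0, ∞) is continuous, ∫_0^{t*} y(τ) dτ < ∞, and y(t) → ∞ as t → t*−, then y cannot satisfy the differential inequality y'(t) ≤ a y(t)² + b (with constants a, b > 0) on (0, t*); equivalently, any continuous solution of y' ≤ a y² + b that is locally integrable on [0, t*] stays bounded on [0, t*]. -/
open Set MeasureTheory Filter Topology in
/-- Local Riccati bound forbids integrable blow-up: a nonnegative `C¹` function `y`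
on `[0,t*)` satisfying `y' ≤ a y² + b` that is integrable on `[0,t*)` cannot tend
to `+∞` as `t → t*⁻`. -/
theorem stmt19 (a b tstar : ℝ) (ha : 0 < a) (hb : 0 < b) (htstar : 0 < tstar)
    (y y' : ℝ → ℝ) (hpos : ∀ t ∈ Ico 0 tstar, 0 ≤ y t)
    (hderiv : ∀ t ∈ Ico 0 tstar, HasDerivAt y (y' t) t)
    (hineq : ∀ t ∈ Ico 0 tstar, y' t ≤ a * y t ^ 2 + b)
    (hint : MeasureTheory.IntegrableOn y (Ico 0 tstar))
    (hblow : Filter.Tendsto y (nhdsWithin tstar (Iio tstar)) Filter.atTop) :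
    False := by
  set R : ℝ := b / a + 1 with hR
  have hRpos : 0 < R := by positivity
  have haR : b ≤ a * R ^ 2 := by
    have : a * R ^ 2 = a * (b/a)^2 + 2 * (a * (b/a)) + a := by ring
    rw [this, mul_div_cancel₀ _ ha.ne']
    nlinarith [sq_nonneg (b/a), ha.le]
  -- find t₀ such that y ≥ R on [t₀, tstar)
  obtain ⟨l, hl, hlR⟩ : ∃ l ∈ Ico 0 tstar, ∀ t ∈ Ico l tstar, R ≤ y t := by
    have hev : ∀ᶠ t in nhdsWithin tstar (Iio tstar), R ≤ y t :=
      hblow.eventually (eventually_ge_atTop R)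
    rw [eventually_nhdsWithin_iff] at hev
    obtain ⟨ε, hε, hball⟩ := Metric.eventually_nhds_iff.mp hev
    refine ⟨max 0 (tstar - ε/2), ⟨le_max_left _ _, ?_⟩, ?_⟩
    · exact max_lt htstar (by linarith)
    · intro t ht
      have h1 : tstar - ε/2 ≤ t := le_trans (le_max_right _ _) ht.1
      have h2 : t < tstar := ht.2
      exact hball (by rw [Real.dist_eq]; rw [abs_lt]; constructor <;> linarith) h2
  have hl0 : 0 ≤ l := hl.1
  have hlt : l < tstar := hl.2
  have hsub : Ico l tstar ⊆ Ico 0 tstar := Ico_subset_Ico hl0 le_rfl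
  have hypos : ∀ t ∈ Ico l tstar, 0 < y t := fun t ht => lt_of_lt_of_le hRpos (hlR t ht)
  -- the function g t = (y t)⁻¹ + 2 a t is monotone on [l, tstar)
  set g : ℝ → ℝ := fun t => (y t)⁻¹ + 2 * a * t with hg
  have hgderiv : ∀ t ∈ Ico l tstar,
      HasDerivAt g (-(y' t) / y t ^ 2 + 2 * a) t := by
    intro t ht
    exact ((hderiv t (hsub ht)).inv (hypos t ht).ne').add
      ((hasDerivAt_id t).const_mul (2*a) |>.congr_deriv (mul_one _))
  have hmono : MonotoneOn g (Ico l tstar) := by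
    apply monotoneOn_of_deriv_nonneg (convex_Ico l tstar)
    · intro t ht
      exact ((hgderiv t ht).continuousAt).continuousWithinAt
    · intro t ht
      rw [interior_Ico] at ht
      exact (hgderiv t (Ioo_subset_Ico_self ht)).differentiableAt.differentiableWithinAt
    · intro t ht
      rw [interior_Ico] at ht
      have ht' : t ∈ Ico l tstar := Ioo_subset_Ico_self ht
      rw [(hgderiv t ht').deriv]
      have hyt := hypos t ht'
      have h1 : y' t ≤ 2 * a * y t ^ 2 := by
        have := hineq t (hsub ht')
        have hyR := hlR t ht'
        nlinarith [mul_le_mul_of_nonneg_left (pow_le_pow_left₀ hRpos.le hyR 2) ha.le]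
      have h2 : (0:ℝ) < y t ^ 2 := by positivity
      rw [neg_div]
      have : y' t / y t ^ 2 ≤ 2 * a := by
        rw [div_le_iff₀ h2]; nlinarith
      linarith
  -- pointwise lower bound on y
  have hlow : ∀ s ∈ Ico l tstar, (tstar - s)⁻¹ ≤ 2 * a * y s := by
    intro s hs
    have hys := hypos s hs
    have hkey : (y s)⁻¹ ≤ 2 * a * (tstar - s) := by
      have hne : (nhdsWithin tstar (Iio tstar)).NeBot := by
        exact nhdsLT_neBot tstar
      have hev : ∀ᶠ t in nhdsWithin tstar (Iio tstar), g s ≤ g t := by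
        filter_upwards [self_mem_nhdsWithin,
          eventually_nhdsWithin_of_eventually_nhds (eventually_gt_nhds hs.2)] with t ht1 ht2
        exact hmono hs ⟨hs.1.trans ht2.le, ht1⟩ ht2.le
      have hlim : Tendsto g (nhdsWithin tstar (Iio tstar)) (𝓝 (0 + 2 * a * tstar)) := by
        apply Tendsto.add
        · exact hblow.inv_tendsto_atTop
        · exact (tendsto_nhdsWithin_of_tendsto_nhds
            ((continuous_const.mul continuous_id).tendsto tstar))
      have := ge_of_tendsto hlim hev
      simp only [hg, zero_add] at this
      linarith
    have h2a : (0:ℝ) < tstar - s := by linarith [hs.2]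
    have h1 : 1 ≤ 2 * a * (tstar - s) * y s := by
      have := mul_le_mul_of_nonneg_right hkey hys.le
      rwa [inv_mul_cancel₀ hys.ne'] at this
    rw [inv_le_iff_one_le_mul₀ h2a]
    nlinarith
  -- (tstar - s)⁻¹ is integrable: contradiction
  have hIntg : IntegrableOn (fun s => (tstar - s)⁻¹) (Ico l tstar) := by
    apply Integrable.mono' ((hint.mono_set hsub).const_mul (2*a))
    · exact ((measurable_const.sub measurable_id).inv).aestronglyMeasurable
    · filter_upwards [ae_restrict_mem measurableSet_Ico] with s hs
      have h2a : (0:ℝ) < tstar - s := by linarith [hs.2]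
      rw [Real.norm_eq_abs, abs_of_pos (by positivity)]
      exact hlow s hs
  have hII : IntervalIntegrable (fun s => (tstar - s)⁻¹) volume l tstar := by
    rw [intervalIntegrable_iff_integrableOn_Ioc_of_le hlt.le]
    rw [integrableOn_Ioc_iff_integrableOn_Ioo]
    exact hIntg.mono_set Ioo_subset_Ico_self
  refine not_intervalIntegrable_of_sub_inv_isBigO_punctured ?_ hlt.ne
    (right_mem_uIcc) hII
  apply Asymptotics.IsBigO.of_bound 1
  filter_upwards with x
  simp only [Real.norm_eq_abs, one_mul, abs_inv]
  rw [abs_sub_comm]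
end
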